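/- The function h(z) = Σ_{k=1}^∞ k z^{2^{2^k}} is analytic on the unit disk and satisfies lim_{|z|→1^-} |h(z)|/log(e/(1-|z|)) = 0. -/

import Mathlib

open Metric

private lemma le_NN (k : ℕ) : k ≤ 2 ^ 2 ^ k :=
  le_trans (Nat.lt_two_pow_self (n := k)).le (Nat.pow_le_pow_right (by norm_num) (Nat.lt_two_pow_self (n := k)).le)

private lemma summable_real {r : ℝ} (h0 : 0 ≤ r) (h1 : r < 1) :
    Summable (fun k : ℕ => (k : ℝ) * r ^ (2 ^ 2 ^ k)) := by
  have hs : Summable (fun k : ℕ => (k : ℝ) * r ^ k) := by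
    simpa using summable_pow_mul_geometric_of_norm_lt_one (R := ℝ) 1 (by
      rw [Real.norm_eq_abs, abs_of_nonneg h0]; exact h1)
  refine Summable.of_nonneg_of_le (fun k => by positivity) (fun k => ?_) hs
  exact mul_le_mul_of_nonneg_left (pow_le_pow_of_le_one h0 h1.le (le_NN k)) (by positivity)

private lemma summable_cx {z : ℂ} (hz : ‖z‖ < 1) :
    Summable (fun k : ℕ => (k : ℂ) * z ^ (2 ^ 2 ^ k)) := by
  refine Summable.of_norm ?_
  have : (fun k : ℕ => ‖(k : ℂ) * z ^ (2 ^ 2 ^ k)‖)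
      = fun k : ℕ => (k : ℝ) * ‖z‖ ^ (2 ^ 2 ^ k) := by
    funext k; simp [norm_mul, norm_pow]
  rw [this]
  exact summable_real (norm_nonneg z) hz

/-- key estimate: if `1 ≤ (1-r) * 2^(2^m)` and `1 ≤ m` then the sum is at most `3 m^2`. -/
private lemma sum_bound {r : ℝ} (h0 : 0 ≤ r) (h1 : r < 1) {m : ℕ} (hm1 : 1 ≤ m)
    (hm : (1 : ℝ) ≤ (1 - r) * 2 ^ (2 ^ m)) :
    (∑' k : ℕ, (k : ℝ) * r ^ (2 ^ 2 ^ k)) ≤ 3 * m ^ 2 := by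
  have hsum := summable_real h0 h1
  have hsplit := Summable.sum_add_tsum_nat_add (f := fun k : ℕ => (k : ℝ) * r ^ (2 ^ 2 ^ k)) m hsum
  rw [← hsplit]
  -- head
  have hhead : (∑ k ∈ Finset.range m, (k : ℝ) * r ^ (2 ^ 2 ^ k)) ≤ m * m := by
    have : ∀ k ∈ Finset.range m, (k : ℝ) * r ^ (2 ^ 2 ^ k) ≤ (m : ℝ) := by
      intro k hk
      have hk' : (k : ℝ) ≤ m := by exact_mod_cast (Finset.mem_range.mp hk).le
      have hr : r ^ (2 ^ 2 ^ k) ≤ 1 := pow_le_one₀ h0 h1.le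
      calc (k : ℝ) * r ^ (2 ^ 2 ^ k) ≤ (k : ℝ) * 1 :=
            mul_le_mul_of_nonneg_left hr (by positivity)
        _ ≤ (m : ℝ) := by simpa using hk'
    calc (∑ k ∈ Finset.range m, (k : ℝ) * r ^ (2 ^ 2 ^ k))
        ≤ ∑ _k ∈ Finset.range m, (m : ℝ) := Finset.sum_le_sum this
      _ = m * m := by simp [mul_comm]
  -- tail : each term (j+m) r^{N_{j+m}} ≤ m (j+1) x^{j+1} with x = exp(-1)
  set x : ℝ := Real.exp (-1) with hxdef
  have hx0 : 0 < x := Real.exp_pos _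
  have hx1 : x ≤ 1 / 2 := by
    rw [hxdef, Real.exp_neg]
    rw [inv_le_comm₀ (Real.exp_pos 1) (by norm_num)]
    have := Real.add_one_le_exp (1 : ℝ)
    linarith
  have hterm : ∀ j : ℕ, ((j + m : ℕ) : ℝ) * r ^ (2 ^ 2 ^ (j + m))
      ≤ (m : ℝ) * ((j + 1 : ℕ) * x ^ (j + 1)) := by
    intro j
    -- (1-r) * 2^(2^(j+m)) ≥ j+1
    have hpow : (1 : ℝ) * 2 ^ (j : ℕ) ≤ (1 - r) * 2 ^ (2 ^ (j + m)) := by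
      have h2 : 2 ^ m + j ≤ 2 ^ (j + m) := by
        have hj : 1 + j ≤ 2 ^ j := by
          have := Nat.lt_two_pow_self (n := j); omega
        have hm' : 1 ≤ 2 ^ m := Nat.one_le_two_pow
        calc 2 ^ m + j ≤ 2 ^ m + j * 2 ^ m := by nlinarith
          _ = (1 + j) * 2 ^ m := by ring
          _ ≤ 2 ^ j * 2 ^ m := Nat.mul_le_mul_right _ hj
          _ = 2 ^ (j + m) := (pow_add 2 j m).symm
      have : (1 - r) * 2 ^ (2 ^ m) * 2 ^ (j : ℕ) ≤ (1 - r) * 2 ^ (2 ^ (j + m)) := by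
        rw [mul_assoc, ← pow_add]
        refine mul_le_mul_of_nonneg_left ?_ (by linarith)
        exact pow_le_pow_right₀ (by norm_num) h2
      calc (1 : ℝ) * 2 ^ (j : ℕ) ≤ (1 - r) * 2 ^ (2 ^ m) * 2 ^ (j : ℕ) :=
            mul_le_mul_of_nonneg_right hm (by positivity)
        _ ≤ _ := this
    have hj1 : ((j : ℝ) + 1) ≤ (1 - r) * 2 ^ (2 ^ (j + m)) := by
      have hjj : ((j : ℝ) + 1) ≤ 2 ^ (j : ℕ) := by
        have : j + 1 ≤ 2 ^ j := by have := Nat.lt_two_pow_self (n := j); omega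
        exact_mod_cast this
      linarith [hpow]
    -- r ≤ exp(-(1-r)), so r^N ≤ exp(-(1-r)N) ≤ exp(-(j+1)) = x^(j+1)
    have hrexp : r ≤ Real.exp (-(1 - r)) := by
      have := Real.add_one_le_exp (-(1 - r))
      linarith
    have hrN : r ^ (2 ^ 2 ^ (j + m)) ≤ x ^ (j + 1) := by
      calc r ^ (2 ^ 2 ^ (j + m)) ≤ (Real.exp (-(1 - r))) ^ (2 ^ 2 ^ (j + m)) :=
            pow_le_pow_left₀ h0 hrexp _
        _ = Real.exp ((2 ^ 2 ^ (j + m) : ℕ) * (-(1 - r))) := (Real.exp_nat_mul _ _).symm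
        _ ≤ Real.exp (-((j : ℝ) + 1)) := by
            apply Real.exp_le_exp.mpr
            have hcast : (((2 ^ 2 ^ (j + m) : ℕ)) : ℝ) = (2 : ℝ) ^ (2 ^ (j + m)) := by
              push_cast; ring
            rw [hcast]
            nlinarith [hj1]
        _ = x ^ (j + 1) := by
            rw [hxdef, ← Real.exp_nat_mul]
            congr 1; push_cast; ring
    have hcoef : ((j + m : ℕ) : ℝ) ≤ (m : ℝ) * ((j + 1 : ℕ) : ℝ) := by
      push_cast
      have : (1 : ℝ) ≤ m := by exact_mod_cast hm1
      nlinarith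
    calc ((j + m : ℕ) : ℝ) * r ^ (2 ^ 2 ^ (j + m))
        ≤ ((j + m : ℕ) : ℝ) * x ^ (j + 1) := by
          exact mul_le_mul_of_nonneg_left hrN (by positivity)
      _ ≤ (m : ℝ) * ((j + 1 : ℕ) : ℝ) * x ^ (j + 1) := by
          exact mul_le_mul_of_nonneg_right hcoef (by positivity)
      _ = (m : ℝ) * ((j + 1 : ℕ) * x ^ (j + 1)) := by ring
  -- summability of the majorant
  have hxlt1 : x < 1 := lt_of_le_of_lt hx1 (by norm_num)
  have hgs : Summable (fun n : ℕ => (n : ℝ) * x ^ n) := by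
    simpa using summable_pow_mul_geometric_of_norm_lt_one (R := ℝ) 1 (by
      rw [Real.norm_eq_abs, abs_of_nonneg hx0.le]; exact hxlt1)
  have hgs' : Summable (fun j : ℕ => ((j + 1 : ℕ) : ℝ) * x ^ (j + 1)) :=
    (summable_nat_add_iff (f := fun n : ℕ => (n : ℝ) * x ^ n) 1).mpr hgs
  have htails : Summable (fun j : ℕ => ((j + m : ℕ) : ℝ) * r ^ (2 ^ 2 ^ (j + m))) :=
    (summable_nat_add_iff (f := fun k : ℕ => (k : ℝ) * r ^ (2 ^ 2 ^ k)) m).mpr hsum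
  have htail : (∑' j : ℕ, ((j + m : ℕ) : ℝ) * r ^ (2 ^ 2 ^ (j + m)))
      ≤ (m : ℝ) * 2 := by
    have h1' : (∑' j : ℕ, ((j + m : ℕ) : ℝ) * r ^ (2 ^ 2 ^ (j + m)))
        ≤ ∑' j : ℕ, (m : ℝ) * (((j + 1 : ℕ) : ℝ) * x ^ (j + 1)) := by
      exact Summable.tsum_le_tsum hterm htails (hgs'.mul_left _)
    have h2' : (∑' j : ℕ, (m : ℝ) * (((j + 1 : ℕ) : ℝ) * x ^ (j + 1)))
        = (m : ℝ) * ∑' j : ℕ, ((j + 1 : ℕ) : ℝ) * x ^ (j + 1) := tsum_mul_left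
    have h3' : (∑' j : ℕ, ((j + 1 : ℕ) : ℝ) * x ^ (j + 1)) ≤ 2 := by
      have heq : (∑' j : ℕ, ((j + 1 : ℕ) : ℝ) * x ^ (j + 1)) = ∑' n : ℕ, (n : ℝ) * x ^ n := by
        rw [Summable.tsum_eq_zero_add hgs]
        simp
      rw [heq]
      have hval : (∑' n : ℕ, (n : ℝ) * x ^ n) = x / (1 - x) ^ 2 :=
        tsum_coe_mul_geometric_of_norm_lt_one (by
          rw [Real.norm_eq_abs, abs_of_nonneg hx0.le]; exact hxlt1)
      rw [hval]
      rw [div_le_iff₀ (by nlinarith)]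
      nlinarith
    calc (∑' j : ℕ, ((j + m : ℕ) : ℝ) * r ^ (2 ^ 2 ^ (j + m)))
        ≤ (m : ℝ) * ∑' j : ℕ, ((j + 1 : ℕ) : ℝ) * x ^ (j + 1) := by rw [← h2']; exact h1'
      _ ≤ (m : ℝ) * 2 := by
          refine mul_le_mul_of_nonneg_left h3' (by positivity)
  have hmR : (1 : ℝ) ≤ m := by exact_mod_cast hm1
  nlinarith [hhead, htail]

theorem counterexample_in_X0 :
    DifferentiableOn ℂ (fun z => ∑' k : ℕ, (k : ℂ) * z ^ (2 ^ 2 ^ k)) (ball (0 : ℂ) 1) ∧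
      ∀ ε : ℝ, 0 < ε → ∃ δ : ℝ, δ < 1 ∧ ∀ z ∈ ball (0 : ℂ) 1, δ < ‖z‖ →
        ‖∑' k : ℕ, (k : ℂ) * z ^ (2 ^ 2 ^ k)‖ / Real.log (Real.exp 1 / (1 - ‖z‖)) < ε := by
  constructor
  · -- differentiability
    intro z₀ hz₀
    rw [mem_ball_zero_iff] at hz₀
    set ρ : ℝ := (‖z₀‖ + 1) / 2 with hρ
    have hρ0 : 0 ≤ ρ := by positivity
    have hρ1 : ρ < 1 := by rw [hρ]; linarith
    have hz₀ρ : ‖z₀‖ < ρ := by rw [hρ]; linarith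
    have hdiff : DifferentiableOn ℂ (fun z => ∑' k : ℕ, (k : ℂ) * z ^ (2 ^ 2 ^ k))
        (ball (0 : ℂ) ρ) := by
      apply Complex.differentiableOn_tsum_of_summable_norm (u := fun k : ℕ => (k : ℝ) * ρ ^ (2 ^ 2 ^ k))
        (summable_real hρ0 hρ1)
      · intro i
        exact (differentiable_const _ |>.mul (differentiable_pow _)).differentiableOn
      · exact isOpen_ball
      · intro i w hw
        rw [mem_ball_zero_iff] at hw
        rw [norm_mul, norm_pow, Complex.norm_natCast]
        exact mul_le_mul_of_nonneg_left
          (pow_le_pow_left₀ (norm_nonneg w) hw.le _) (Nat.cast_nonneg i)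
    exact ((hdiff.differentiableAt (isOpen_ball.mem_nhds (by
      rwa [mem_ball_zero_iff]))).differentiableWithinAt)
  · -- the limit
    intro ε hε
    -- get M with 12 m² (1/2)^m < ε for m ≥ M
    have htend : Filter.Tendsto (fun m : ℕ => 12 * (m : ℝ) ^ 2 * (1 / 2 : ℝ) ^ m)
        Filter.atTop (nhds 0) := by
      have : Filter.Tendsto (fun m : ℕ => (m : ℝ) ^ 2 * (1 / 2 : ℝ) ^ m)
          Filter.atTop (nhds 0) :=
        (summable_pow_mul_geometric_of_norm_lt_one (R := ℝ) 2 (by norm_num)).tendsto_atTop_zero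
      have h12 := this.const_mul (12 : ℝ)
      simpa [mul_assoc] using h12
    obtain ⟨M₀, hM₀⟩ := Filter.eventually_atTop.mp (htend.eventually_lt_const hε)
    set M : ℕ := max M₀ 1 with hM
    refine ⟨1 - ((2 : ℝ) ^ (2 ^ M))⁻¹, by
      have : (0 : ℝ) < ((2 : ℝ) ^ (2 ^ M))⁻¹ := by positivity
      linarith, ?_⟩
    intro z hz hδz
    rw [mem_ball_zero_iff] at hz
    set r : ℝ := ‖z‖ with hr
    have hr0 : 0 ≤ r := norm_nonneg z
    have ht0 : 0 < 1 - r := by linarith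
    have htM : 1 - r < ((2 : ℝ) ^ (2 ^ M))⁻¹ := by linarith
    -- define m = least index with 1 ≤ (1-r) * 2^(2^k)
    have hex : ∃ k : ℕ, (1 : ℝ) ≤ (1 - r) * 2 ^ (2 ^ k) := by
      obtain ⟨n, hn⟩ := exists_nat_ge ((1 - r)⁻¹)
      refine ⟨n, ?_⟩
      have h1 : (1 - r)⁻¹ ≤ ((2 : ℝ) ^ (2 ^ n)) := by
        calc (1 - r)⁻¹ ≤ (n : ℝ) := hn
          _ ≤ ((2 ^ 2 ^ n : ℕ) : ℝ) := by exact_mod_cast le_NN n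
          _ = (2 : ℝ) ^ (2 ^ n) := by push_cast; ring
      calc (1 : ℝ) = (1 - r) * (1 - r)⁻¹ := by field_simp
        _ ≤ (1 - r) * 2 ^ (2 ^ n) := mul_le_mul_of_nonneg_left h1 ht0.le
    set m : ℕ := Nat.find hex with hmdef
    have hmspec : (1 : ℝ) ≤ (1 - r) * 2 ^ (2 ^ m) := Nat.find_spec hex
    have hMm : M < m := by
      by_contra hcon
      push_neg at hcon
      have : (1 - r) * 2 ^ (2 ^ m) ≤ (1 - r) * 2 ^ (2 ^ M) := by
        refine mul_le_mul_of_nonneg_left ?_ ht0.le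
        exact pow_le_pow_right₀ (by norm_num) (Nat.pow_le_pow_right (by norm_num) hcon)
      have hp : (0 : ℝ) < (2 : ℝ) ^ (2 ^ M) := by positivity
      have h2 : (1 - r) * 2 ^ (2 ^ M) < 1 := by
        have h3 := mul_lt_mul_of_pos_right htM hp
        rwa [inv_mul_cancel₀ hp.ne'] at h3
      linarith
    have hm1 : 1 ≤ m := le_trans (le_max_right M₀ 1) hMm.le
    -- minimality at m-1
    have hmin : (1 - r) * 2 ^ (2 ^ (m - 1)) < 1 := by
      have := Nat.find_min hex (m := m - 1) (by omega)
      push_neg at this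
      exact this
    -- lower bound on log
    have hL : Real.log (Real.exp 1 / (1 - r)) > 2 ^ (m - 1) * Real.log 2 := by
      rw [Real.log_div (Real.exp_ne_zero 1) (ne_of_gt ht0), Real.log_exp]
      have hq : (0 : ℝ) < (2 : ℝ) ^ (2 ^ (m - 1)) := by positivity
      have h1 : (1 - r) < ((2 : ℝ) ^ (2 ^ (m - 1)))⁻¹ := by
        have h4 := mul_lt_mul_of_pos_right hmin (inv_pos.mpr hq)
        rwa [one_mul, mul_assoc, mul_inv_cancel₀ hq.ne', mul_one] at h4
      have h2 : Real.log (1 - r) < Real.log ((2 : ℝ) ^ (2 ^ (m - 1)))⁻¹ :=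
        Real.log_lt_log ht0 h1
      rw [Real.log_inv, Real.log_pow] at h2
      push_cast at h2 ⊢
      linarith
    have hlog2 : (0.6931471803 : ℝ) < Real.log 2 := Real.log_two_gt_d9
    have hLpos : 0 < Real.log (Real.exp 1 / (1 - r)) := by
      have : (0 : ℝ) < 2 ^ (m - 1) * Real.log 2 := by positivity
      linarith
    -- norm bound
    have hnorm : ‖∑' k : ℕ, (k : ℂ) * z ^ (2 ^ 2 ^ k)‖ ≤ ∑' k : ℕ, (k : ℝ) * r ^ (2 ^ 2 ^ k) := by
      have := norm_tsum_le_tsum_norm (f := fun k : ℕ => (k : ℂ) * z ^ (2 ^ 2 ^ k)) (by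
        have : (fun k : ℕ => ‖(k : ℂ) * z ^ (2 ^ 2 ^ k)‖)
            = fun k : ℕ => (k : ℝ) * r ^ (2 ^ 2 ^ k) := by
          funext k; simp [norm_mul, norm_pow, hr]
        rw [this]
        exact summable_real hr0 hz)
      calc ‖∑' k : ℕ, (k : ℂ) * z ^ (2 ^ 2 ^ k)‖ ≤ ∑' k : ℕ, ‖(k : ℂ) * z ^ (2 ^ 2 ^ k)‖ := this
        _ = ∑' k : ℕ, (k : ℝ) * r ^ (2 ^ 2 ^ k) := by
            congr 1; funext k; simp [norm_mul, norm_pow, hr]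
    have hS : ‖∑' k : ℕ, (k : ℂ) * z ^ (2 ^ 2 ^ k)‖ ≤ 3 * (m : ℝ) ^ 2 :=
      le_trans hnorm (sum_bound hr0 hz hm1 hmspec)
    -- arithmetic finish
    have hMε : 12 * ((m : ℝ)) ^ 2 * (1 / 2 : ℝ) ^ m < ε :=
      hM₀ m (le_trans (le_max_left M₀ 1) hMm.le)
    rw [div_lt_iff₀ hLpos]
    have hmm : m - 1 + 1 = m := Nat.succ_pred_eq_of_pos hm1
    have h2m : (2 : ℝ) ^ m = 2 * 2 ^ (m - 1) := by
      rw [← pow_succ']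
      congr 1
      omega
    have hkey : 3 * (m : ℝ) ^ 2 < ε * (2 ^ (m - 1) * Real.log 2) := by
      have hp : (0 : ℝ) < (2 : ℝ) ^ m := by positivity
      have h12' : 12 * ((m : ℝ)) ^ 2 < ε * 2 ^ m := by
        have hhalf : ((1 : ℝ) / 2) ^ m = ((2 : ℝ) ^ m)⁻¹ := by
          rw [div_pow, one_pow, one_div]
        rw [hhalf] at hMε
        have h5 := mul_lt_mul_of_pos_right hMε hp
        rwa [mul_assoc, inv_mul_cancel₀ hp.ne', mul_one] at h5
      have hm2 : (0 : ℝ) < 2 ^ (m - 1) := by positivity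
      have hmpos : (1 : ℝ) ≤ (m : ℝ) := by exact_mod_cast hm1
      have h6 : 6 * (m : ℝ) ^ 2 < ε * 2 ^ (m - 1) := by
        rw [h2m] at h12'; linarith
      have hlogpos : (0 : ℝ) < Real.log 2 := lt_trans (by norm_num) hlog2
      have h7 := mul_lt_mul_of_pos_right h6 hlogpos
      have h8 : (0 : ℝ) ≤ (m : ℝ) ^ 2 * (6 * Real.log 2 - 3) :=
        mul_nonneg (sq_nonneg _) (by linarith)
      nlinarith [h7, h8]
    calc ‖∑' k : ℕ, (k : ℂ) * z ^ (2 ^ 2 ^ k)‖ ≤ 3 * (m : ℝ) ^ 2 := hS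
      _ < ε * (2 ^ (m - 1) * Real.log 2) := hkey
      _ ≤ ε * Real.log (Real.exp 1 / (1 - r)) :=
          mul_le_mul_of_nonneg_left hL.le hε.le
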